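/- arXiv:1109.0787 — 2 statements merged into one kernel-verified Lean document; each statement's English description precedes it below -/
import Mathlib

section
/- Let (G,R) be a graph with roots such that G is disconnected, and let M be a matroid on R of rank k satisfying conditions (C1), (C2), (C3). Then for each connected component (G',R') of (G,R) (where G'=(V',E') is a connected component of G and R'=R_{E'} is the multiset of roots lying in V'), R' is a spanning set of M (i.e. r_M(R')=k), and (G',R') satisfies (C1), (C2), (C3) with respect to the restriction matroid M|R'. -/
open Finset
open scoped Classical

/-- Vertex set `V(F)` of an edge subset `F`: vertices incident to an edge of `F`. -/
noncomputable def incVerts {V E : Type*} [Fintype V] (ends : E → Sym2 V) (F : Finset E) :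
    Finset V :=
  Finset.univ.filter (fun v => ∃ e ∈ F, v ∈ ends e)

/-- The multiset `R_v` of roots located at a vertex `v` (as a set of root indices). -/
noncomputable def rootsAt {V ι : Type*} [Fintype ι] (root : ι → V) (v : V) : Finset ι :=
  Finset.univ.filter (fun i => root i = v)

/-- The multiset `R_F` of roots located at vertices of `V(F)`. -/
noncomputable def rootsOf {V E ι : Type*} [Fintype V] [Fintype ι] (ends : E → Sym2 V)
    (root : ι → V) (F : Finset E) : Finset ι :=
  Finset.univ.filter (fun i => root i ∈ incVerts ends F)

/-- The multiset `R_X` of roots located at vertices of `X ⊆ V`. -/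
noncomputable def rootsIn {V ι : Type*} [Fintype ι] (root : ι → V) (X : Finset V) : Finset ι :=
  Finset.univ.filter (fun i => root i ∈ X)

/-- A matroid on a finite ground type `ι`, given by its rank function. -/
structure FinMatroid (ι : Type*) [Fintype ι] where
  rk : Finset ι → ℕ
  rk_le_card : ∀ X : Finset ι, rk X ≤ X.card
  rk_mono : ∀ ⦃X Y : Finset ι⦄, X ⊆ Y → rk X ≤ rk Y
  rk_submodular : ∀ X Y : Finset ι, rk (X ∪ Y) + rk (X ∩ Y) ≤ rk X + rk Y

/-- Independence in a matroid given by a rank function. -/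
def FinMatroid.Indep {ι : Type*} [Fintype ι] (M : FinMatroid ι) (X : Finset ι) : Prop :=
  M.rk X = X.card

/-- `X` is a base of the matroid with rank function `ρ`: independent and spanning. -/
def IsBaseOf {ι : Type*} [Fintype ι] (ρ : Finset ι → ℕ) (X : Finset ι) : Prop :=
  ρ X = X.card ∧ ρ X = ρ Finset.univ

/-- The closure (span) `sp(X)` of `X` in the matroid with rank function `ρ`. -/
noncomputable def spOf {ι : Type*} [Fintype ι] (ρ : Finset ι → ℕ) (X : Finset ι) : Finset ι :=
  Finset.univ.filter (fun y => ρ (insert y X) = ρ X)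

/-- Two vertices are adjacent via an edge of `F`. -/
def adjIn {V E : Type*} (ends : E → Sym2 V) (F : Finset E) (u v : V) : Prop :=
  ∃ e ∈ F, ends e = s(u, v)

/-- The edge set `F` is connected: all its incident vertices are mutually reachable in `F`. -/
def connIn {V E : Type*} [Fintype V] (ends : E → Sym2 V) (F : Finset E) : Prop :=
  ∀ u ∈ incVerts ends F, ∀ v ∈ incVerts ends F, Relation.ReflTransGen (adjIn ends F) u v

/-- `(T, r)` is a rooted tree: `T` is empty, or `T` is connected and acyclic with `r ∈ V(T)`.
(A connected edge set `T` is acyclic iff `|T| + 1 = |V(T)|`.) -/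
def IsRootedTree {V E : Type*} [Fintype V] (ends : E → Sym2 V) (T : Finset E) (r : V) : Prop :=
  T = ∅ ∨ (connIn ends T ∧ T.card + 1 = (incVerts ends T).card ∧ r ∈ incVerts ends T)

/-- The vertex set `V(T, r) = V(T) ∪ {r}` spanned by the rooted tree `(T, r)`. -/
noncomputable def treeVerts {V E : Type*} [Fintype V] (ends : E → Sym2 V) (T : Finset E)
    (r : V) : Finset V :=
  insert r (incVerts ends T)

/-- `T` is a spanning tree on the vertex set `X`. -/
def IsSpanningTreeOn {V E : Type*} [Fintype V] (ends : E → Sym2 V) (X : Finset V)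
    (T : Finset E) : Prop :=
  incVerts ends T ⊆ X ∧ (∀ u ∈ X, ∀ v ∈ X, Relation.ReflTransGen (adjIn ends T) u v) ∧
    T.card + 1 = X.card

/-- The family `T` is a basic rooted-tree decomposition of the subgraph with vertex set `Vs`,
edge set `Es` and roots indexed by `Rs`, with respect to the matroid (on `Rs`) whose rank
function is `ρ`: the `T i` are edge-disjoint rooted trees partitioning `Es`, and every vertex
of `Vs` is spanned by a family of rooted trees whose root multiset is a base. -/
def IsBasicDecompFam {V E ι : Type*} [Fintype V] [Fintype ι] (ends : E → Sym2 V) (root : ι → V)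
    (ρ : Finset ι → ℕ) (Vs : Finset V) (Rs : Finset ι) (Es : Finset E)
    (T : ι → Finset E) : Prop :=
  (∀ i ∈ Rs, T i ⊆ Es ∧ IsRootedTree ends (T i) (root i)) ∧
  (∀ i ∉ Rs, T i = ∅) ∧
  (∀ i j, i ≠ j → Disjoint (T i) (T j)) ∧
  (∀ e ∈ Es, ∃ i ∈ Rs, e ∈ T i) ∧
  (∀ v ∈ Vs, IsBaseOf ρ (Rs.filter (fun i => v ∈ treeVerts ends (T i) (root i))))

/-- `(G, R)` admits a basic rooted-tree decomposition. -/
def HasBasicDecomp {V E ι : Type*} [Fintype V] [Fintype ι] (ends : E → Sym2 V) (root : ι → V)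
    (ρ : Finset ι → ℕ) (Vs : Finset V) (Rs : Finset ι) (Es : Finset E) : Prop :=
  ∃ T : ι → Finset E, IsBasicDecompFam ends root ρ Vs Rs Es T

/-- Condition (C1): the root multiset at each vertex is independent. -/
def CondC1 {V ι : Type*} [Fintype ι] (root : ι → V) (ρ : Finset ι → ℕ) : Prop :=
  ∀ v : V, ρ (rootsAt root v) = (rootsAt root v).card

/-- Condition (C2): `|F| + |R_F| ≤ k|V(F)| - k + ρ(R_F)` for every nonempty `F ⊆ E`. -/
def CondC2 {V E ι : Type*} [Fintype V] [Fintype E] [Fintype ι] (ends : E → Sym2 V)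
    (root : ι → V) (ρ : Finset ι → ℕ) (k : ℕ) : Prop :=
  ∀ F : Finset E, F.Nonempty →
    F.card + (rootsOf ends root F).card + k ≤
      k * (incVerts ends F).card + ρ (rootsOf ends root F)

/-- Condition (C3): `|E| + |R| = k|V|`. -/
def CondC3 (V E ι : Type*) [Fintype V] [Fintype E] [Fintype ι] (k : ℕ) : Prop :=
  Fintype.card E + Fintype.card ι = k * Fintype.card V

/-- The function `f_{M,c}(F) = c(|V(F)| - 1) - (|R_F| - r_M(R_F))`, as an integer. -/
noncomputable def fcount {V E ι : Type*} [Fintype V] [Fintype E] [Fintype ι] (ends : E → Sym2 V)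
    (root : ι → V) (ρ : Finset ι → ℕ) (c : ℤ) (F : Finset E) : ℤ :=
  c * ((incVerts ends F).card - 1) -
    (((rootsOf ends root F).card : ℤ) - (ρ (rootsOf ends root F) : ℤ))

/-- The graph `G` (with edge map `ends`) is connected: any two vertices are mutually
reachable using edges of `G`. -/
def GraphConnected {V E : Type*} [Fintype E] (ends : E → Sym2 V) : Prop :=
  ∀ u v : V, Relation.ReflTransGen (adjIn ends Finset.univ) u v

/-- `C` is the vertex set of a connected component of `G`: nonempty, closed under
reachability, and any two of its vertices are mutually reachable. -/
def IsConnComponent {V E : Type*} [Fintype V] [Fintype E] (ends : E → Sym2 V)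
    (C : Finset V) : Prop :=
  C.Nonempty ∧
  (∀ u ∈ C, ∀ v : V, Relation.ReflTransGen (adjIn ends Finset.univ) u v → v ∈ C) ∧
  (∀ u ∈ C, ∀ v ∈ C, Relation.ReflTransGen (adjIn ends Finset.univ) u v)

section AuxLemmas

variable {V E ι : Type*} [Fintype V] [Fintype E] [Fintype ι]

lemma rootsAt_subset_rootsIn (root : ι → V) {v : V} {X : Finset V} (hv : v ∈ X) :
    rootsAt root v ⊆ rootsIn root X := by
  intro i hi
  simp only [rootsAt, rootsIn, mem_filter, mem_univ, true_and] at *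
  rw [hi]; exact hv

lemma rootsIn_subset_rootsIn (root : ι → V) {A B : Finset V} (h : A ⊆ B) :
    rootsIn root A ⊆ rootsIn root B := by
  intro i hi
  simp only [rootsIn, mem_filter, mem_univ, true_and] at *
  exact h hi

lemma rootsIn_eq_biUnion (root : ι → V) (S : Finset V) :
    rootsIn root S = S.biUnion (rootsAt root) := by
  ext i
  simp only [rootsIn, rootsAt, mem_filter, mem_univ, true_and, mem_biUnion]
  constructor
  · intro h; exact ⟨root i, h, rfl⟩
  · rintro ⟨v, hv, h⟩; exact h ▸ hv

lemma card_rootsIn_eq_sum (root : ι → V) (S : Finset V) :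
    (rootsIn root S).card = ∑ v ∈ S, (rootsAt root v).card := by
  rw [rootsIn_eq_biUnion]
  refine Finset.card_biUnion ?_
  intro u _ v _ huv
  simp only [Finset.disjoint_left, rootsAt, mem_filter, mem_univ, true_and]
  intro i h1 h2
  exact huv (h1.symm.trans h2)

lemma card_rootsIn_le (root : ι → V) (M : FinMatroid ι) (k : ℕ)
    (hk : M.rk Finset.univ = k) (hC1 : CondC1 root M.rk) (S : Finset V) :
    (rootsIn root S).card ≤ k * S.card := by
  rw [card_rootsIn_eq_sum]
  calc ∑ v ∈ S, (rootsAt root v).card ≤ ∑ _v ∈ S, k := by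
        refine Finset.sum_le_sum fun v _ => ?_
        rw [← hC1 v, ← hk]
        exact M.rk_mono (Finset.subset_univ _)
    _ = k * S.card := by rw [Finset.sum_const, smul_eq_mul, mul_comm]

lemma rootsOf_eq_rootsIn (ends : E → Sym2 V) (root : ι → V) (F : Finset E) :
    rootsOf ends root F = rootsIn root (incVerts ends F) := rfl

/-- Key counting inequality for any nonempty edge-closed set of vertices. -/
lemma closed_ineq (ends : E → Sym2 V) (root : ι → V) (M : FinMatroid ι) (k : ℕ)
    (hk : M.rk Finset.univ = k) (hC1 : CondC1 root M.rk) (hC2 : CondC2 ends root M.rk k)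
    (X : Finset V) (hne : X.Nonempty)
    (hcl : ∀ e : E, ∀ v ∈ ends e, v ∈ X → ∀ w ∈ ends e, w ∈ X) :
    (Finset.univ.filter (fun e => ∀ v ∈ ends e, v ∈ X)).card + (rootsIn root X).card + k
      ≤ k * X.card + M.rk (rootsIn root X) := by
  classical
  set EX := Finset.univ.filter (fun e : E => ∀ v ∈ ends e, v ∈ X) with hEXdef
  rcases EX.eq_empty_or_nonempty with hE | hE
  · -- no edges inside X
    obtain ⟨v0, hv0⟩ := hne
    have hcardX : X.card = (X.erase v0).card + 1 := by
      rw [Finset.card_erase_of_mem hv0]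
      have : 1 ≤ X.card := Finset.card_pos.2 ⟨v0, hv0⟩
      omega
    have hsum : (rootsIn root X).card
        = (rootsAt root v0).card + (rootsIn root (X.erase v0)).card := by
      rw [card_rootsIn_eq_sum, card_rootsIn_eq_sum,
        ← Finset.add_sum_erase X (fun v => (rootsAt root v).card) hv0]
    have h1 : (rootsAt root v0).card = M.rk (rootsAt root v0) := (hC1 v0).symm
    have h2 : M.rk (rootsAt root v0) ≤ M.rk (rootsIn root X) :=
      M.rk_mono (rootsAt_subset_rootsIn root hv0)
    have h3 : (rootsIn root (X.erase v0)).card ≤ k * (X.erase v0).card :=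
      card_rootsIn_le root M k hk hC1 _
    have h4 : k * X.card = k * (X.erase v0).card + k := by rw [hcardX]; ring
    rw [hE]
    simp only [Finset.card_empty]
    omega
  · -- there is an edge inside X
    have hC2' := hC2 EX hE
    have hincsub : incVerts ends EX ⊆ X := by
      intro v hv
      simp only [incVerts, mem_filter, mem_univ, true_and] at hv
      obtain ⟨e, he, hve⟩ := hv
      rw [hEXdef, mem_filter] at he
      exact he.2 v hve
    have hcardX : (X \ incVerts ends EX).card + (incVerts ends EX).card = X.card :=
      Finset.card_sdiff_add_card_eq_card hincsub
    have hsum : (rootsIn root (X \ incVerts ends EX)).card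
        + (rootsOf ends root EX).card = (rootsIn root X).card := by
      rw [rootsOf_eq_rootsIn, card_rootsIn_eq_sum, card_rootsIn_eq_sum, card_rootsIn_eq_sum]
      exact Finset.sum_sdiff hincsub
    have hS : (rootsIn root (X \ incVerts ends EX)).card
        ≤ k * (X \ incVerts ends EX).card := card_rootsIn_le root M k hk hC1 _
    have hmono : M.rk (rootsOf ends root EX) ≤ M.rk (rootsIn root X) := by
      rw [rootsOf_eq_rootsIn]
      exact M.rk_mono (rootsIn_subset_rootsIn root hincsub)
    have h4 : k * X.card
        = k * (X \ incVerts ends EX).card + k * (incVerts ends EX).card := by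
      rw [← hcardX]; ring
    omega

end AuxLemmas

/-- **Lemma (connected components of a disconnected graph with roots).**
Let `(G, R)` be a disconnected graph with roots satisfying (C1), (C2), (C3) with respect to
a matroid `M` of rank `k`.  Then for each connected component `(G', R')` (with vertex set
`C`, edge set `E'` of the edges inside `C`, and roots `R' = R_{E'}` lying in `C`):
`R'` is a spanning set of `M`, and `(G', R')` satisfies (C1), (C2), (C3) with respect to the
restriction `M|R'` (whose rank function on subsets of `R'` is that of `M`, and whose rank is
`r_M(R')`). -/
theorem connComponent_conditions {V E ι : Type*} [Fintype V] [Fintype E] [Fintype ι]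
    (ends : E → Sym2 V) (root : ι → V) (M : FinMatroid ι) (k : ℕ)
    (hk : M.rk Finset.univ = k)
    (hdisc : ¬ GraphConnected ends)
    (hC1 : CondC1 root M.rk) (hC2 : CondC2 ends root M.rk k) (hC3 : CondC3 V E ι k)
    (C : Finset V) (hC : IsConnComponent ends C) :
    -- the edge set and root multiset of the component
    ∀ E' : Finset E, E' = Finset.univ.filter (fun e => ∀ v ∈ ends e, v ∈ C) →
    ∀ Rs : Finset ι, Rs = rootsIn root C →
      -- `R'` is a spanning set of `M`
      M.rk Rs = k ∧
      -- (C1) for `(G', R')` with respect to `M|R'`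
      (∀ v ∈ C, M.rk (rootsAt root v) = (rootsAt root v).card) ∧
      -- (C2) for `(G', R')` with respect to `M|R'`
      (∀ F ⊆ E', F.Nonempty →
        F.card + (rootsOf ends root F).card + M.rk Rs ≤
          M.rk Rs * (incVerts ends F).card + M.rk (rootsOf ends root F)) ∧
      -- (C3) for `(G', R')` with respect to `M|R'`
      E'.card + Rs.card = M.rk Rs * C.card := by
  classical
  intro E' hE' Rs hRs
  obtain ⟨hCne, hCcl, hCconn⟩ := hC
  set D : Finset V := Finset.univ \ C with hD
  have hmemD : ∀ v : V, v ∈ D ↔ v ∉ C := by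
    intro v; simp [hD]
  -- C is closed under edges
  have hclC : ∀ e : E, ∀ v ∈ ends e, v ∈ C → ∀ w ∈ ends e, w ∈ C := by
    intro e v hv hvC w hw
    by_cases hvw : v = w
    · exact hvw ▸ hvC
    · have hse : ends e = s(v, w) := ((Sym2.mem_and_mem_iff hvw).1 ⟨hv, hw⟩)
      exact hCcl v hvC w (Relation.ReflTransGen.single ⟨e, Finset.mem_univ e, hse⟩)
  -- D is closed under edges
  have hclD : ∀ e : E, ∀ v ∈ ends e, v ∈ D → ∀ w ∈ ends e, w ∈ D := by
    intro e v hv hvD w hw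
    rw [hmemD] at hvD ⊢
    intro hwC
    exact hvD (hclC e w hw hwC v hv)
  -- D is nonempty since G is disconnected
  have hDne : D.Nonempty := by
    rcases D.eq_empty_or_nonempty with h | h
    · exfalso
      apply hdisc
      intro u v
      have hu : u ∈ C := by
        by_contra hu; exact absurd ((hmemD u).2 hu) (by simp [h])
      have hv : v ∈ C := by
        by_contra hv; exact absurd ((hmemD v).2 hv) (by simp [h])
      exact hCconn u hu v hv
    · exact h
  -- the two key inequalities
  have hIC := closed_ineq ends root M k hk hC1 hC2 C hCne hclC
  have hID := closed_ineq ends root M k hk hC1 hC2 D hDne hclD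
  -- edge partition
  set ED : Finset E := Finset.univ.filter (fun e => ∀ v ∈ ends e, v ∈ D) with hED
  have hEDcompl : ED = Finset.univ.filter (fun e => ¬ ∀ v ∈ ends e, v ∈ C) := by
    ext e
    simp only [hED, mem_filter, mem_univ, true_and]
    constructor
    · intro h hall
      have hm := Sym2.out_fst_mem (ends e)
      exact ((hmemD _).1 (h _ hm)) (hall _ hm)
    · intro h
      have : ∃ w ∈ ends e, w ∉ C := by
        by_contra hc
        push_neg at hc
        exact h hc
      obtain ⟨w, hw, hwC⟩ := this
      exact hclD e w hw ((hmemD w).2 hwC)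
  have hEcard : E'.card + ED.card = Fintype.card E := by
    rw [hE', hEDcompl]
    rw [Finset.card_filter_add_card_filter_not]
    rfl
  -- root partition
  have hRcard : Rs.card + (rootsIn root D).card = Fintype.card ι := by
    have : rootsIn root D = Finset.univ.filter (fun i => ¬ root i ∈ C) := by
      ext i
      simp only [rootsIn, mem_filter, mem_univ, true_and, hmemD]
    rw [hRs, this]
    rw [show rootsIn root C = Finset.univ.filter (fun i => root i ∈ C) from rfl,
      Finset.card_filter_add_card_filter_not]
    rfl
  -- vertex partition
  have hVcard : C.card + D.card = Fintype.card V := by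
    rw [hD, Finset.card_sdiff_of_subset (Finset.subset_univ C), Finset.card_univ]
    have := Finset.card_le_card (Finset.subset_univ C)
    rw [Finset.card_univ] at this
    omega
  have hkV : k * C.card + k * D.card = Fintype.card E + Fintype.card ι := by
    rw [← Nat.left_distrib, hVcard, ← hC3]
  -- rank bounds
  have hrkC : M.rk (rootsIn root C) ≤ k := hk ▸ M.rk_mono (Finset.subset_univ _)
  have hrkD : M.rk (rootsIn root D) ≤ k := hk ▸ M.rk_mono (Finset.subset_univ _)
  -- rewrite E'.card inside hIC
  rw [← hE'] at hIC
  rw [← hRs] at hIC hrkC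
  -- conclude spanning
  -- (hID already mentions ED)
  have hspan : M.rk Rs = k := by omega
  refine ⟨hspan, fun v _ => hC1 v, ?_, ?_⟩
  · intro F _ hFne
    rw [hspan]
    exact hC2 F hFne
  · rw [hspan]
    omega
end

section
/- In the setting of the auxiliary bipartite graph H_0: let 0≤ℓ≤k be an integer, let e∈E, and let H_e=(V_e^+,V_e^−;A_e) be obtained from H_0 by adding ℓ new elements e_1,…,e_ℓ (copies of e) to V_0^+, each joined to v^i for every copy v^i of a vertex v incident to e. Define g_{k,ℓ}(F)=k|V(F)|−ℓ+r_M(F∩L) for F⊆E∪L. Suppose |F| ≤ g_{k,0}(F) holds for every F⊆E∪L. Then |F| ≤ g_{k,ℓ}(F) holds for every F⊆E∪L with e∈F if and only if H_e has an independent matching covering V_e^+. -/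
open Finset
open scoped Classical

/-- Incidence of a vertex `v` with an element of `E ∪ L` in the graph `G*` obtained by
adding a self-loop at the vertex of each root. -/
def incStar {V E ι : Type*} (ends : E → Sym2 V) (root : ι → V) (v : V) : E ⊕ ι → Prop
  | Sum.inl e => v ∈ ends e
  | Sum.inr r => root r = v

/-- The vertex set `V(F)` of a subset `F ⊆ E ∪ L` in `G*`. -/
noncomputable def incVertsStar {V E ι : Type*} [Fintype V] (ends : E → Sym2 V)
    (root : ι → V) (F : Finset (E ⊕ ι)) : Finset V :=
  Finset.univ.filter (fun v => ∃ x ∈ F, incStar ends root v x)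

/-- The loop part `F ∩ L` of a subset `F ⊆ E ∪ L`. -/
noncomputable def loopPart {E ι : Type*} [Fintype ι] (F : Finset (E ⊕ ι)) : Finset ι :=
  Finset.univ.filter (fun r => Sum.inr r ∈ F)

/-- The adjacency of the auxiliary bipartite graph `H₀ = (V₀⁺, V₀⁻; A₀)`:
`V₀⁺ = E ∪ L`, `V₀⁻ = (V¹ ∪ ⋯ ∪ Vᵏ) ∪ L'`; each `e ∈ L` is joined to its copy `e' ∈ L'`,
and each `e ∈ E ∪ L` is joined to every copy `vⁱ` of every vertex `v` incident to `e`
in `G*`. -/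
def adjH0 {V E ι : Type*} (ends : E → Sym2 V) (root : ι → V) (k : ℕ) :
    E ⊕ ι → (Fin k × V) ⊕ ι → Prop
  | x, Sum.inl (_, v) => incStar ends root v x
  | Sum.inr r, Sum.inr r' => r' = r
  | Sum.inl _, Sum.inr _ => False

/-- The adjacency of the auxiliary bipartite graph `H_e`, obtained from `H₀` by adding
`ℓ` copies `e₁, …, e_ℓ` of the edge `e ∈ E` to `V₀⁺`, each joined to every copy `vⁱ` of
every vertex `v` incident to `e`. -/
def adjHe {V E ι : Type*} (ends : E → Sym2 V) (root : ι → V) (k ℓ : ℕ) (e : E) :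
    (E ⊕ ι) ⊕ Fin ℓ → (Fin k × V) ⊕ ι → Prop
  | Sum.inl x, y => adjH0 ends root k x y
  | Sum.inr _, Sum.inl (_, v) => v ∈ ends e
  | Sum.inr _, Sum.inr _ => False

section RankLemmas
variable {B : Type*} (ρ : Finset B → ℕ)
  (h1 : ∀ X : Finset B, ρ X ≤ X.card)
  (h2 : ∀ ⦃X Y : Finset B⦄, X ⊆ Y → ρ X ≤ ρ Y)
  (h3 : ∀ X Y : Finset B, ρ (X ∪ Y) + ρ (X ∩ Y) ≤ ρ X + ρ Y)

include h1 in
lemma rk_empty' : ρ ∅ = 0 := Nat.le_zero.mp (by simpa using h1 ∅)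

include h3 h1 in
lemma rk_subadd : ∀ X Y : Finset B, ρ (X ∪ Y) ≤ ρ X + ρ Y := by
  intro X Y
  have := h3 X Y
  omega

include h1 h2 h3 in
lemma rk_insert_le (b : B) (X : Finset B) : ρ (insert b X) ≤ ρ X + 1 := by
  have := rk_subadd ρ h1 h3 X {b}
  have hb : ρ {b} ≤ 1 := by simpa using h1 {b}
  have : ρ (X ∪ {b}) ≤ ρ X + 1 := by omega
  rw [Finset.insert_eq, Finset.union_comm]; exact this

include h1 h2 h3 in
lemma indep_subset {X D : Finset B} (hX : ρ X = X.card) (hD : D ⊆ X) : ρ D = D.card := by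
  have hUn : D ∪ (X \ D) = X := Finset.union_sdiff_of_subset hD
  have h4 : ρ X ≤ ρ D + ρ (X \ D) := by
    have := rk_subadd ρ h1 h3 D (X \ D)
    rwa [hUn] at this
  have h5 : ρ (X \ D) ≤ (X \ D).card := h1 _
  have h6 : (X \ D).card = X.card - D.card := Finset.card_sdiff_of_subset hD
  have h7 : D.card ≤ X.card := Finset.card_le_card hD
  have h8 : ρ D ≤ D.card := h1 _
  omega

include h2 h3 in
lemma insert_span_mono {X X' : Finset B} (b : B) (hXX : X ⊆ X')
    (hb : ρ (insert b X) = ρ X) : ρ (insert b X') = ρ X' := by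
  have hsub := h3 X' (insert b X)
  have h4 : X' ∪ insert b X = insert b X' := by
    rw [Finset.union_insert, Finset.union_eq_left.mpr hXX]
  have h5 : X ⊆ X' ∩ insert b X :=
    Finset.subset_inter hXX (Finset.subset_insert _ _)
  have h6 : ρ X ≤ ρ (X' ∩ insert b X) := h2 h5
  have h7 : ρ X' ≤ ρ (insert b X') := h2 (Finset.subset_insert _ _)
  rw [h4] at hsub
  omega

include h2 h3 in
lemma span_union {X Y : Finset B} (hY : ∀ b ∈ Y, ρ (insert b X) = ρ X) :
    ρ (X ∪ Y) = ρ X := by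
  classical
  induction Y using Finset.induction with
  | empty => simp
  | @insert b Y hbY ih =>
    have h4 : ρ (X ∪ Y) = ρ X := ih (fun c hc => hY c (Finset.mem_insert_of_mem hc))
    have h5 : ρ (insert b (X ∪ Y)) = ρ (X ∪ Y) := by
      rw [h4]
      have := insert_span_mono ρ h2 h3 b (Finset.subset_union_left (s₂ := Y))
        (hY b (Finset.mem_insert_self _ _))
      rw [this, h4]
    rw [Finset.union_insert, h5, h4]

end RankLemmas

section Rado
variable {A B : Type*} [Fintype B] (adj : A → B → Prop)

/-- neighborhood of a single left vertex -/
noncomputable def nbhdF (a : A) : Finset B := Finset.univ.filter (fun b => adj a b)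

/-- neighborhood of a set of left vertices -/
noncomputable def nbhdS (S : Finset A) : Finset B :=
  Finset.univ.filter (fun b => ∃ a ∈ S, adj a b)

lemma mem_nbhdS {S : Finset A} {b : B} : b ∈ nbhdS adj S ↔ ∃ a ∈ S, adj a b := by
  simp [nbhdS]

lemma nbhdS_empty : nbhdS adj (∅ : Finset A) = ∅ := by
  ext b; simp [mem_nbhdS]

lemma nbhdS_union (S T : Finset A) : nbhdS adj (S ∪ T) = nbhdS adj S ∪ nbhdS adj T := by
  ext b
  simp only [mem_nbhdS, Finset.mem_union]
  constructor
  · rintro ⟨a, ha | ha, hb⟩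
    exacts [Or.inl ⟨a, ha, hb⟩, Or.inr ⟨a, ha, hb⟩]
  · rintro (⟨a, ha, hb⟩ | ⟨a, ha, hb⟩)
    exacts [⟨a, Or.inl ha, hb⟩, ⟨a, Or.inr ha, hb⟩]

lemma nbhdS_mono {S T : Finset A} (h : S ⊆ T) : nbhdS adj S ⊆ nbhdS adj T := by
  intro b hb
  rw [mem_nbhdS] at hb ⊢
  obtain ⟨a, ha, hab⟩ := hb
  exact ⟨a, h ha, hab⟩

lemma nbhdS_insert (a : A) (S : Finset A) :
    nbhdS adj (insert a S) = nbhdF adj a ∪ nbhdS adj S := by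
  ext b
  simp only [mem_nbhdS, Finset.mem_union, Finset.mem_insert, nbhdF, Finset.mem_filter,
    Finset.mem_univ, true_and]
  constructor
  · rintro ⟨x, rfl | hx, hb⟩
    exacts [Or.inl hb, Or.inr ⟨x, hx, hb⟩]
  · rintro (hb | ⟨x, hx, hb⟩)
    exacts [⟨a, Or.inl rfl, hb⟩, ⟨x, Or.inr hx, hb⟩]

theorem rado [Nonempty B] :
    ∀ (n : ℕ) (ρ : Finset B → ℕ),
    (∀ X : Finset B, ρ X ≤ X.card) →
    (∀ ⦃X Y : Finset B⦄, X ⊆ Y → ρ X ≤ ρ Y) →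
    (∀ X Y : Finset B, ρ (X ∪ Y) + ρ (X ∩ Y) ≤ ρ X + ρ Y) →
    ∀ (S : Finset A), S.card = n →
    (∀ T ⊆ S, T.card ≤ ρ (nbhdS adj T)) →
    ∃ μ : A → B, Set.InjOn μ S ∧ (∀ a ∈ S, adj a (μ a)) ∧
      ρ (S.image μ) = (S.image μ).card := by
  classical
  intro n
  induction n with
  | zero =>
    intro ρ h1 h2 h3 S hS _
    rw [Finset.card_eq_zero] at hS
    subst hS
    exact ⟨fun _ => Classical.arbitrary B, by simp, by simp, by simpa using rk_empty' ρ h1⟩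
  | succ m ih =>
    intro ρ h1 h2 h3 S hS hRado
    obtain ⟨a, ha⟩ : S.Nonempty := Finset.card_pos.mp (by omega)
    set S' := S.erase a with hS'
    have haS' : a ∉ S' := Finset.notMem_erase _ _
    have hS'sub : S' ⊆ S := Finset.erase_subset _ _
    have hScard : S'.card = m := by
      rw [hS', Finset.card_erase_of_mem ha, hS]; omega
    have hSins : insert a S' = S := Finset.insert_erase ha
    -- dichotomy
    by_cases hdi : ∃ b ∈ nbhdF adj a, ρ {b} = 1 ∧
        (∀ T ⊆ S', T.card ≤ ρ (insert b (nbhdS adj T)) - 1)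
    · obtain ⟨b, hbN, hb1, hcond⟩ := hdi
      -- contracted rank function
      set ρ' : Finset B → ℕ := fun X => ρ (insert b X) - 1 with hρ'
      have hge1 : ∀ X : Finset B, 1 ≤ ρ (insert b X) := by
        intro X
        calc 1 = ρ {b} := hb1.symm
        _ ≤ ρ (insert b X) := h2 (by simp)
      have h1' : ∀ X : Finset B, ρ' X ≤ X.card := by
        intro X
        have := rk_insert_le ρ h1 h2 h3 b X
        have := h1 X
        simp only [hρ']
        omega
      have h2' : ∀ ⦃X Y : Finset B⦄, X ⊆ Y → ρ' X ≤ ρ' Y := by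
        intro X Y hXY
        simp only [hρ']
        have := h2 (Finset.insert_subset_insert b hXY)
        omega
      have h3' : ∀ X Y : Finset B, ρ' (X ∪ Y) + ρ' (X ∩ Y) ≤ ρ' X + ρ' Y := by
        intro X Y
        have hsub := h3 (insert b X) (insert b Y)
        have e1 : insert b X ∪ insert b Y = insert b (X ∪ Y) := by
          simp [Finset.insert_union, Finset.union_insert]
        have e2 : insert b X ∩ insert b Y = insert b (X ∩ Y) := by
          rw [Finset.insert_inter_distrib]
        rw [e1, e2] at hsub
        have := hge1 (X ∪ Y)
        have := hge1 (X ∩ Y)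
        have := hge1 X
        have := hge1 Y
        simp only [hρ']
        omega
      obtain ⟨μ', hinj', hadj', hind'⟩ := ih ρ' h1' h2' h3' S' hScard hcond
      set img := S'.image μ' with himg
      have hρins : ρ (insert b img) = img.card + 1 := by
        have := hge1 img
        simp only [hρ'] at hind'
        omega
      have hbimg : b ∉ img := by
        intro hb
        rw [Finset.insert_eq_self.mpr hb] at hρins
        have := h1 img
        omega
      have himgeq : S.image (Function.update μ' a b) = insert b img := by
        rw [← hSins, Finset.image_insert, Function.update_self]
        congr 1
        apply Finset.image_congr
        intro x hx
        exact Function.update_of_ne (by rintro rfl; exact haS' hx) _ _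
      refine ⟨Function.update μ' a b, ?_, ?_, ?_⟩
      · intro x hx y hy hxy
        by_cases hxa : x = a
        · by_cases hya : y = a
          · rw [hxa, hya]
          · exfalso
            have hyS' : y ∈ S' := Finset.mem_erase.mpr ⟨hya, hy⟩
            rw [hxa, Function.update_self, Function.update_of_ne hya] at hxy
            exact hbimg (hxy ▸ Finset.mem_image_of_mem μ' hyS')
        · by_cases hya : y = a
          · exfalso
            have hxS' : x ∈ S' := Finset.mem_erase.mpr ⟨hxa, hx⟩
            rw [hya, Function.update_self, Function.update_of_ne hxa] at hxy
            exact hbimg (hxy.symm ▸ Finset.mem_image_of_mem μ' hxS')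
          · have hxS' : x ∈ S' := Finset.mem_erase.mpr ⟨hxa, hx⟩
            have hyS' : y ∈ S' := Finset.mem_erase.mpr ⟨hya, hy⟩
            rw [Function.update_of_ne hxa, Function.update_of_ne hya] at hxy
            exact hinj' hxS' hyS' hxy
      · intro x hx
        by_cases hxa : x = a
        · rw [hxa, Function.update_self]
          simpa [nbhdF] using hbN
        · rw [Function.update_of_ne hxa]
          exact hadj' x (Finset.mem_erase.mpr ⟨hxa, hx⟩)
      · rw [himgeq, hρins, Finset.card_insert_of_notMem hbimg]
    · push_neg at hdi
      -- key: build a tight set U spanning all neighbors of a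
      have key : ∀ D : Finset B, D ⊆ nbhdF adj a →
          ∃ U ⊆ S', ρ (nbhdS adj U) = U.card ∧
            ∀ b ∈ D, ρ (insert b (nbhdS adj U)) = ρ (nbhdS adj U) := by
        intro D
        induction D using Finset.induction with
        | empty =>
          intro _
          refine ⟨∅, Finset.empty_subset _, ?_, by simp⟩
          rw [nbhdS_empty, rk_empty' ρ h1, Finset.card_empty]
        | @insert b D hbD ihD =>
          intro hsub
          obtain ⟨U, hUS', hUtight, hUspan⟩ :=
            ihD ((Finset.subset_insert _ _).trans hsub)
          by_cases hb1 : ρ {b} = 1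
          · obtain ⟨T, hTS', hTlt⟩ := hdi b (hsub (Finset.mem_insert_self _ _)) hb1
            have hge : 1 ≤ ρ (insert b (nbhdS adj T)) := by
              calc 1 = ρ {b} := hb1.symm
              _ ≤ ρ (insert b (nbhdS adj T)) := h2 (by simp)
            have hTle : ρ (insert b (nbhdS adj T)) ≤ T.card := by omega
            have hTrado : T.card ≤ ρ (nbhdS adj T) := hRado T (hTS'.trans hS'sub)
            have hmono : ρ (nbhdS adj T) ≤ ρ (insert b (nbhdS adj T)) :=
              h2 (Finset.subset_insert _ _)
            have hTtight : ρ (nbhdS adj T) = T.card := by omega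
            have hTbspan : ρ (insert b (nbhdS adj T)) = ρ (nbhdS adj T) := by omega
            refine ⟨U ∪ T, Finset.union_subset hUS' hTS', ?_, ?_⟩
            · have hN : nbhdS adj (U ∪ T) = nbhdS adj U ∪ nbhdS adj T :=
                nbhdS_union adj U T
              have hsubm := h3 (nbhdS adj U) (nbhdS adj T)
              have hint : nbhdS adj (U ∩ T) ⊆ nbhdS adj U ∩ nbhdS adj T :=
                Finset.subset_inter (nbhdS_mono adj Finset.inter_subset_left)
                  (nbhdS_mono adj Finset.inter_subset_right)
              have h5 : (U ∩ T).card ≤ ρ (nbhdS adj (U ∩ T)) :=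
                hRado _ ((Finset.inter_subset_left).trans (hUS'.trans hS'sub))
              have h6 : ρ (nbhdS adj (U ∩ T)) ≤ ρ (nbhdS adj U ∩ nbhdS adj T) := h2 hint
              have h7 : (U ∪ T).card ≤ ρ (nbhdS adj (U ∪ T)) :=
                hRado _ (Finset.union_subset (hUS'.trans hS'sub) (hTS'.trans hS'sub))
              have hcards : (U ∪ T).card + (U ∩ T).card = U.card + T.card :=
                Finset.card_union_add_card_inter U T
              rw [hN] at h7 ⊢
              omega
            · intro b' hb'
              rcases Finset.mem_insert.mp hb' with rfl | hb'D
              · rw [nbhdS_union adj U T]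
                exact insert_span_mono ρ h2 h3 b' Finset.subset_union_right hTbspan
              · rw [nbhdS_union adj U T]
                exact insert_span_mono ρ h2 h3 b' Finset.subset_union_left (hUspan b' hb'D)
          · have hb0 : ρ {b} = 0 := by
              have := h1 {b}
              simp only [Finset.card_singleton] at this
              omega
            refine ⟨U, hUS', hUtight, ?_⟩
            intro b' hb'
            rcases Finset.mem_insert.mp hb' with rfl | hb'D
            · have hle : ρ (insert b' (nbhdS adj U)) ≤ ρ (nbhdS adj U) := by
                have := rk_subadd ρ h1 h3 (nbhdS adj U) {b'}
                have he : nbhdS adj U ∪ {b'} = insert b' (nbhdS adj U) := by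
                  rw [Finset.union_comm, ← Finset.insert_eq]
                rw [he, hb0] at this
                omega
              exact le_antisymm hle (h2 (Finset.subset_insert _ _))
            · exact hUspan b' hb'D
      obtain ⟨U, hUS', hUtight, hUspan⟩ := key (nbhdF adj a) Finset.Subset.rfl
      have hspan : ρ (nbhdS adj U ∪ nbhdF adj a) = ρ (nbhdS adj U) :=
        span_union ρ h2 h3 hUspan
      have hNins : nbhdS adj (insert a U) = nbhdF adj a ∪ nbhdS adj U :=
        nbhdS_insert adj a U
      have haU : a ∉ U := fun h => haS' (hUS' h)
      have hR := hRado (insert a U) (Finset.insert_subset ha (hUS'.trans hS'sub))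
      rw [Finset.card_insert_of_notMem haU, hNins, Finset.union_comm] at hR
      omega

theorem rado' [Nonempty B] (ρ : Finset B → ℕ)
    (h1 : ∀ X : Finset B, ρ X ≤ X.card)
    (h2 : ∀ ⦃X Y : Finset B⦄, X ⊆ Y → ρ X ≤ ρ Y)
    (h3 : ∀ X Y : Finset B, ρ (X ∪ Y) + ρ (X ∩ Y) ≤ ρ X + ρ Y)
    (S : Finset A)
    (hRado : ∀ T ⊆ S, T.card ≤ ρ (nbhdS adj T)) :
    ∃ μ : A → B, Set.InjOn μ S ∧ (∀ a ∈ S, adj a (μ a)) ∧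
      ρ (S.image μ) = (S.image μ).card :=
  rado adj S.card ρ h1 h2 h3 S rfl hRado

end Rado

section App

noncomputable def leftSumPart {α β : Type*} [Fintype α] (F : Finset (α ⊕ β)) : Finset α :=
  Finset.univ.filter (fun a => Sum.inl a ∈ F)

lemma mem_leftSumPart {α β : Type*} [Fintype α] {F : Finset (α ⊕ β)} {a : α} :
    a ∈ leftSumPart F ↔ Sum.inl a ∈ F := by simp [leftSumPart]

lemma mem_loopPart {α β : Type*} [Fintype β] {F : Finset (α ⊕ β)} {r : β} :
    r ∈ loopPart F ↔ Sum.inr r ∈ F := by simp [loopPart]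

lemma sum_card_split {α β : Type*} [Fintype α] [Fintype β] (F : Finset (α ⊕ β)) :
    F.card = (leftSumPart F).card + (loopPart F).card := by
  classical
  have hd : Disjoint ((leftSumPart F).image Sum.inl) ((loopPart F).image Sum.inr) := by
    simp [Finset.disjoint_left]
  have h : F = (leftSumPart F).image Sum.inl ∪ (loopPart F).image Sum.inr := by
    ext x
    cases x <;> simp [mem_leftSumPart, mem_loopPart]
  conv_lhs => rw [h]
  rw [Finset.card_union_of_disjoint hd,
    Finset.card_image_of_injective _ Sum.inl_injective,
    Finset.card_image_of_injective _ Sum.inr_injective]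

lemma leftSumPart_mono {α β : Type*} [Fintype α] {F G : Finset (α ⊕ β)} (h : F ⊆ G) :
    leftSumPart F ⊆ leftSumPart G := fun a ha =>
  mem_leftSumPart.mpr (h (mem_leftSumPart.mp ha))

lemma loopPart_mono {α β : Type*} [Fintype β] {F G : Finset (α ⊕ β)} (h : F ⊆ G) :
    loopPart F ⊆ loopPart G := fun r hr => mem_loopPart.mpr (h (mem_loopPart.mp hr))

lemma leftSumPart_union {α β : Type*} [Fintype α] (F G : Finset (α ⊕ β)) :
    leftSumPart (F ∪ G) = leftSumPart F ∪ leftSumPart G := by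
  ext a; simp [mem_leftSumPart, Finset.mem_union]

lemma leftSumPart_inter {α β : Type*} [Fintype α] (F G : Finset (α ⊕ β)) :
    leftSumPart (F ∩ G) = leftSumPart F ∩ leftSumPart G := by
  ext a; simp [mem_leftSumPart, Finset.mem_inter]

lemma loopPart_union {α β : Type*} [Fintype β] (F G : Finset (α ⊕ β)) :
    loopPart (F ∪ G) = loopPart F ∪ loopPart G := by
  ext r; simp [mem_loopPart, Finset.mem_union]

lemma loopPart_inter {α β : Type*} [Fintype β] (F G : Finset (α ⊕ β)) :
    loopPart (F ∩ G) = loopPart F ∩ loopPart G := by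
  ext r; simp [mem_loopPart, Finset.mem_inter]

/-- The direct sum rank function on `α ⊕ ι`: free on `α`, `M` on `ι`. -/
noncomputable def rhoB {α ι : Type*} [Fintype α] [Fintype ι] (M : FinMatroid ι)
    (X : Finset (α ⊕ ι)) : ℕ :=
  (leftSumPart X).card + M.rk (loopPart X)

lemma rhoB_le_card {α ι : Type*} [Fintype α] [Fintype ι] (M : FinMatroid ι)
    (X : Finset (α ⊕ ι)) : rhoB M X ≤ X.card := by
  have := M.rk_le_card (loopPart X)
  have := sum_card_split X
  unfold rhoB
  omega

lemma rhoB_mono {α ι : Type*} [Fintype α] [Fintype ι] (M : FinMatroid ι)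
    ⦃X Y : Finset (α ⊕ ι)⦄ (h : X ⊆ Y) : rhoB M X ≤ rhoB M Y := by
  have h1 := Finset.card_le_card (leftSumPart_mono h)
  have h2 := M.rk_mono (loopPart_mono h)
  unfold rhoB
  omega

lemma rhoB_submodular {α ι : Type*} [Fintype α] [Fintype ι] (M : FinMatroid ι)
    (X Y : Finset (α ⊕ ι)) : rhoB M (X ∪ Y) + rhoB M (X ∩ Y) ≤ rhoB M X + rhoB M Y := by
  have h1 : (leftSumPart (X ∪ Y)).card + (leftSumPart (X ∩ Y)).card =
      (leftSumPart X).card + (leftSumPart Y).card := by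
    rw [leftSumPart_union, leftSumPart_inter]
    exact Finset.card_union_add_card_inter _ _
  have h2 := M.rk_submodular (loopPart X) (loopPart Y)
  rw [← loopPart_union, ← loopPart_inter] at h2
  unfold rhoB
  omega

lemma union_eq_union' {α : Type*} (i1 i2 : DecidableEq α) (X Y : Finset α) :
    @Union.union _ (@Finset.instUnion _ i1) X Y = @Union.union _ (@Finset.instUnion _ i2) X Y := by
  ext a
  rw [@Finset.mem_union _ i1, @Finset.mem_union _ i2]

lemma inter_eq_inter' {α : Type*} (i1 i2 : DecidableEq α) (X Y : Finset α) :
    @Inter.inter _ (@Finset.instInter _ i1) X Y = @Inter.inter _ (@Finset.instInter _ i2) X Y := by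
  ext a
  rw [@Finset.mem_inter _ i1, @Finset.mem_inter _ i2]

lemma rhoB_submodular' {α ι : Type*} [Fintype α] [Fintype ι] (M : FinMatroid ι)
    (X Y : Finset (α ⊕ ι)) :
    rhoB M (@Union.union _ (@Finset.instUnion _ (fun a b => Classical.propDecidable (a = b))) X Y)
      + rhoB M (@Inter.inter _ (@Finset.instInter _ (fun a b => Classical.propDecidable (a = b))) X Y)
      ≤ rhoB M X + rhoB M Y := by
  have e1 : (@Union.union _ (@Finset.instUnion _ (fun a b => Classical.propDecidable (a = b))) X Y)
      = X ∪ Y := union_eq_union' _ _ X Y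
  have e2 : (@Inter.inter _ (@Finset.instInter _ (fun a b => Classical.propDecidable (a = b))) X Y)
      = X ∩ Y := inter_eq_inter' _ _ X Y
  rw [e1, e2]
  exact rhoB_submodular M X Y

lemma rhoB_ge {k : ℕ} {V ι : Type*} [Fintype V] [Fintype ι] (M : FinMatroid ι)
    (N : Finset ((Fin k × V) ⊕ ι)) (W : Finset V) (R₀ : Finset ι)
    (h1 : ∀ (i : Fin k) (v : V), v ∈ W → Sum.inl (i, v) ∈ N) (h2 : R₀ ⊆ loopPart N) :
    k * W.card + M.rk R₀ ≤ rhoB M N := by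
  have hW : (Finset.univ ×ˢ W : Finset (Fin k × V)) ⊆ leftSumPart N := by
    rintro ⟨i, v⟩ hiv
    rw [Finset.mem_product] at hiv
    exact mem_leftSumPart.mpr (h1 i v hiv.2)
  have hc := Finset.card_le_card hW
  rw [Finset.card_product, Finset.card_univ, Fintype.card_fin] at hc
  have := M.rk_mono h2
  unfold rhoB
  omega

end App

set_option maxHeartbeats 1000000 in
/-- **Lemma (Rado-type matching criterion for `g_{k,ℓ}`).**
In the setting of `H₀`, let `0 ≤ ℓ ≤ k`, let `e ∈ E`, and let `H_e` be obtained from `H₀`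
by adding `ℓ` copies of `e` to `V₀⁺`.  Suppose `|F| ≤ g_{k,0}(F)` for every `F ⊆ E ∪ L`.
Then `|F| ≤ g_{k,ℓ}(F) = k|V(F)| - ℓ + r_M(F ∩ L)` holds for every `F ⊆ E ∪ L` with
`e ∈ F` if and only if `H_e` has an independent matching covering `V_e⁺`. -/
theorem counting_iff_indep_matching_He {V E ι : Type*} [Fintype V] [Fintype E] [Fintype ι]
    (ends : E → Sym2 V) (root : ι → V) (M : FinMatroid ι) (k ℓ : ℕ)
    (hk : M.rk Finset.univ = k) (hℓ : ℓ ≤ k)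
    (hC1 : CondC1 root M.rk) (hC3 : CondC3 V E ι k)
    (e : E)
    (hg0 : ∀ F : Finset (E ⊕ ι),
      F.card ≤ k * (incVertsStar ends root F).card + M.rk (loopPart F)) :
    (∀ F : Finset (E ⊕ ι), Sum.inl e ∈ F →
      F.card + ℓ ≤ k * (incVertsStar ends root F).card + M.rk (loopPart F)) ↔
    (∃ μ : (E ⊕ ι) ⊕ Fin ℓ → (Fin k × V) ⊕ ι,
      Function.Injective μ ∧
      (∀ x : (E ⊕ ι) ⊕ Fin ℓ, adjHe ends root k ℓ e x (μ x)) ∧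
      M.Indep (Finset.univ.filter (fun r : ι => ∃ x, μ x = Sum.inr r))) := by
  classical
  have hrk0 : M.rk ∅ = 0 := Nat.le_zero.mp (by simpa using M.rk_le_card ∅)
  constructor
  · intro hcount
    obtain ⟨v0, hv0m⟩ : ∃ v, v ∈ ends e := ⟨(ends e).out.1, Sym2.out_fst_mem _⟩
    have hk1 : 1 ≤ k := by
      by_contra hk0
      have hkz : k = 0 := by omega
      have h := hcount {Sum.inl e} (Finset.mem_singleton_self _)
      have hlp : loopPart ({Sum.inl e} : Finset (E ⊕ ι)) = ∅ := by
        ext r; simp [mem_loopPart]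
      rw [hlp, hrk0, hkz, Finset.card_singleton] at h
      omega
    haveI : Nonempty ((Fin k × V) ⊕ ι) := ⟨Sum.inl (⟨0, hk1⟩, v0)⟩
    have hcond : ∀ T ⊆ (Finset.univ : Finset ((E ⊕ ι) ⊕ Fin ℓ)),
        T.card ≤ rhoB M (nbhdS (adjHe ends root k ℓ e) T) := by
      intro S _
      have hsplit := sum_card_split S
      set N := nbhdS (adjHe ends root k ℓ e) S with hN
      set S₀ : Finset (E ⊕ ι) := leftSumPart S with hS₀
      set S₁ : Finset (Fin ℓ) := loopPart S with hS₁
      have hmemN : ∀ x ∈ S, ∀ b, adjHe ends root k ℓ e x b → b ∈ N := by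
        intro x hx b hb
        rw [hN, mem_nbhdS]
        exact ⟨x, hx, hb⟩
      have hloopN : loopPart S₀ ⊆ loopPart N := by
        intro r hr
        rw [mem_loopPart] at hr ⊢
        have hrS : Sum.inl (Sum.inr r : E ⊕ ι) ∈ S := mem_leftSumPart.mp hr
        exact hmemN _ hrS _ (by simp [adjHe, adjH0])
      rcases Finset.eq_empty_or_nonempty S₁ with hS1e | ⟨j, hj⟩
      · have hvert : ∀ (i : Fin k) (v : V), v ∈ incVertsStar ends root S₀ →
            Sum.inl (i, v) ∈ N := by
          intro i v hv
          simp only [incVertsStar, Finset.mem_filter, Finset.mem_univ, true_and] at hv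
          obtain ⟨x₀, hx₀, hinc⟩ := hv
          exact hmemN _ (mem_leftSumPart.mp hx₀) _ (by simpa [adjHe, adjH0] using hinc)
        have h1 := rhoB_ge M N (incVertsStar ends root S₀) (loopPart S₀) hvert hloopN
        have h2 := hg0 S₀
        have hS1c : S₁.card = 0 := by rw [hS1e, Finset.card_empty]
        omega
      · have hjS : Sum.inr j ∈ S := mem_loopPart.mp hj
        set F := insert (Sum.inl e : E ⊕ ι) S₀ with hF
        have hlpF : loopPart F = loopPart S₀ := by
          ext r; simp [mem_loopPart, hF, Finset.mem_insert]
        have hvert : ∀ (i : Fin k) (v : V), v ∈ incVertsStar ends root F →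
            Sum.inl (i, v) ∈ N := by
          intro i v hv
          simp only [incVertsStar, Finset.mem_filter, Finset.mem_univ, true_and] at hv
          obtain ⟨x₀, hx₀, hinc⟩ := hv
          rcases Finset.mem_insert.mp hx₀ with rfl | hx₀S
          · refine hmemN _ hjS _ ?_
            have hve : v ∈ ends e := by simpa [incStar] using hinc
            simpa [adjHe] using hve
          · exact hmemN _ (mem_leftSumPart.mp hx₀S) _ (by simpa [adjHe, adjH0] using hinc)
        have h1 := rhoB_ge M N (incVertsStar ends root F) (loopPart S₀) hvert hloopN
        have h2 := hcount F (Finset.mem_insert_self _ _)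
        rw [hlpF] at h2
        have h3 : S₀.card ≤ F.card := Finset.card_le_card (Finset.subset_insert _ _)
        have h4 : S₁.card ≤ ℓ := by
          have := Finset.card_le_univ S₁
          simpa using this
        omega
    obtain ⟨μ, hinj, hadj, hind⟩ := rado' (adjHe ends root k ℓ e)
      (rhoB M) (rhoB_le_card M) (rhoB_mono M) (rhoB_submodular' M) Finset.univ hcond
    have hind' : rhoB M (Finset.univ.image μ) = (Finset.univ.image μ).card := by
      convert hind using 2 <;> (ext b; simp [Finset.mem_image])
    clear hind
    refine ⟨μ, ?_, ?_, ?_⟩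
    · have h := hinj
      rw [Finset.coe_univ] at h
      exact Set.injOn_univ.mp h
    · intro x; exact hadj x (Finset.mem_univ x)
    · have himg : Finset.univ.filter (fun r : ι => ∃ x, μ x = Sum.inr r) =
          loopPart (Finset.univ.image μ) := by
        ext r
        simp [mem_loopPart, Finset.mem_image]
      rw [FinMatroid.Indep, himg]
      have hsplit2 := sum_card_split (Finset.univ.image μ)
      have hle := M.rk_le_card (loopPart (Finset.univ.image μ))
      unfold rhoB at hind'
      omega
  · rintro ⟨μ, hinj, hadj, hind⟩ F heF
    set S : Finset ((E ⊕ ι) ⊕ Fin ℓ) :=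
      F.image Sum.inl ∪ (Finset.univ : Finset (Fin ℓ)).image Sum.inr with hS
    have hcardS : S.card = F.card + ℓ := by
      rw [hS, Finset.card_union_of_disjoint (by simp [Finset.disjoint_left]),
        Finset.card_image_of_injective _ Sum.inl_injective,
        Finset.card_image_of_injective _ Sum.inr_injective, Finset.card_univ,
        Fintype.card_fin]
    set T := S.image μ with hT
    have hcardT : T.card = S.card := Finset.card_image_of_injective _ hinj
    have hsplitT := sum_card_split T
    have hleft : leftSumPart T ⊆ (Finset.univ : Finset (Fin k)) ×ˢ incVertsStar ends root F := by
      rintro ⟨i, v⟩ hiv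
      rw [mem_leftSumPart] at hiv
      obtain ⟨x, hxS, hx⟩ := Finset.mem_image.mp hiv
      rw [Finset.mem_product]
      refine ⟨Finset.mem_univ _, ?_⟩
      simp only [incVertsStar, Finset.mem_filter, Finset.mem_univ, true_and]
      have hadjx := hadj x
      rw [hx] at hadjx
      rcases x with x₀ | j
      · have hx₀F : x₀ ∈ F := by
          rcases Finset.mem_union.mp hxS with h | h
          · obtain ⟨y, hy, hyx⟩ := Finset.mem_image.mp h
            exact (Sum.inl_injective hyx) ▸ hy
          · obtain ⟨y, hy, hyx⟩ := Finset.mem_image.mp h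
            exact absurd hyx (by simp)
        exact ⟨x₀, hx₀F, by simpa [adjHe, adjH0] using hadjx⟩
      · refine ⟨Sum.inl e, heF, ?_⟩
        have hve : v ∈ ends e := by simpa [adjHe] using hadjx
        simpa [incStar] using hve
    have hleftc : (leftSumPart T).card ≤ k * (incVertsStar ends root F).card := by
      have h := Finset.card_le_card hleft
      rwa [Finset.card_product, Finset.card_univ, Fintype.card_fin] at h
    have hloopT : loopPart T ⊆ loopPart F := by
      intro r hr
      rw [mem_loopPart] at hr ⊢
      obtain ⟨x, hxS, hx⟩ := Finset.mem_image.mp hr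
      have hadjx := hadj x
      rw [hx] at hadjx
      rcases x with x₀ | j
      · rcases x₀ with e' | r'
        · exact absurd hadjx (by simp [adjHe, adjH0])
        · have hrr : r = r' := by simpa [adjHe, adjH0] using hadjx
          subst hrr
          have : Sum.inl (Sum.inr r : E ⊕ ι) ∈ S := hxS
          rcases Finset.mem_union.mp this with h | h
          · obtain ⟨y, hy, hyx⟩ := Finset.mem_image.mp h
            exact (Sum.inl_injective hyx) ▸ hy
          · obtain ⟨y, hy, hyx⟩ := Finset.mem_image.mp h
            exact absurd hyx (by simp)
      · exact absurd hadjx (by simp [adjHe])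
    have hindT : M.rk (loopPart T) = (loopPart T).card := by
      refine indep_subset M.rk M.rk_le_card M.rk_mono M.rk_submodular hind ?_
      intro r hr
      rw [Finset.mem_filter]
      refine ⟨Finset.mem_univ _, ?_⟩
      rw [mem_loopPart] at hr
      obtain ⟨x, _, hx⟩ := Finset.mem_image.mp hr
      exact ⟨x, hx⟩
    have hrkle : M.rk (loopPart T) ≤ M.rk (loopPart F) := M.rk_mono hloopT
    omega
end
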